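/- With g₀(ζ) := ∫_ζ^1 √(t^{−2} − 1) dt − (1−ζ²)^{3/2}/(2−ζ²) and ζ₀ its unique zero in (0, √(2−√2)): g₀(0.58) > 0 and g₀(0.59) < 0, hence 0.58 < ζ₀ < 0.59. -/

import Mathlib

open Real

/-- The leading-order criticality function
`g₀(ζ) = ∫_ζ^1 √(t^{−2}−1) dt − (1−ζ²)^{3/2}/(2−ζ²)`. -/
noncomputable def g0 (ζ : ℝ) : ℝ :=
  (∫ t in ζ..(1 : ℝ), Real.sqrt (1 / t ^ 2 - 1)) - (1 - ζ ^ 2) ^ ((3 : ℝ) / 2) / (2 - ζ ^ 2)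

/-- Closed form of `g₀` on `(0,1]`. -/
noncomputable def Gaux (ζ : ℝ) : ℝ :=
  Real.log (1 + Real.sqrt (1 - ζ ^ 2)) - Real.log ζ - Real.sqrt (1 - ζ ^ 2)
    - (1 - ζ ^ 2) * Real.sqrt (1 - ζ ^ 2) / (2 - ζ ^ 2)

lemma rpow_32 {x : ℝ} (hx : 0 ≤ x) : x ^ ((3 : ℝ) / 2) = x * Real.sqrt x := by
  have : ((3 : ℝ) / 2) = 1 + 1 / 2 := by norm_num
  rw [this, Real.rpow_add' hx (by norm_num), Real.rpow_one, Real.sqrt_eq_rpow]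

lemma hds_sqrt {x : ℝ} (hx0 : 0 < x) (hx1 : x < 1) :
    HasDerivAt (fun t : ℝ => Real.sqrt (1 - t ^ 2)) (-x / Real.sqrt (1 - x ^ 2)) x := by
  have hpos : 0 < 1 - x ^ 2 := by nlinarith
  have h1 : HasDerivAt (fun t : ℝ => 1 - t ^ 2) (-(2 * x)) x := by
    simpa using (hasDerivAt_pow 2 x).const_sub 1
  have h2 := (Real.hasDerivAt_sqrt (ne_of_gt hpos)).comp x h1
  refine h2.congr_deriv (Eq.symm ?_)
  have hs : 0 < Real.sqrt (1 - x ^ 2) := Real.sqrt_pos.2 hpos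
  field_simp

lemma integrand_eq {t : ℝ} (ht : 0 < t) :
    Real.sqrt (1 / t ^ 2 - 1) = Real.sqrt (1 - t ^ 2) / t := by
  have h : 1 / t ^ 2 - 1 = (1 - t ^ 2) / t ^ 2 := by field_simp
  rw [h, Real.sqrt_div' _ (sq_nonneg t), Real.sqrt_sq ht.le]

lemma integral_eval {ζ : ℝ} (h0 : 0 < ζ) (h1 : ζ ≤ 1) :
    (∫ t in ζ..(1 : ℝ), Real.sqrt (1 / t ^ 2 - 1))
      = Real.log (1 + Real.sqrt (1 - ζ ^ 2)) - Real.log ζ - Real.sqrt (1 - ζ ^ 2) := by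
  set F : ℝ → ℝ := fun t => Real.sqrt (1 - t ^ 2) - Real.log (1 + Real.sqrt (1 - t ^ 2)) + Real.log t with hF
  have hcont : ContinuousOn F (Set.Icc ζ 1) := by
    apply ContinuousOn.add
    · apply ContinuousOn.sub
      · exact (continuous_const.sub (continuous_pow 2)).continuousOn.sqrt
      · apply ContinuousOn.log
        · exact (continuous_const.add ((continuous_const.sub (continuous_pow 2)).sqrt)).continuousOn
        · intro x hx
          positivity
    · apply ContinuousOn.log continuousOn_id
      intro x hx
      exact ne_of_gt (lt_of_lt_of_le h0 hx.1)
  have hderiv : ∀ x ∈ Set.Ioo ζ 1, HasDerivAt F (Real.sqrt (1 / x ^ 2 - 1)) x := by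
    intro x hx
    have hx0 : 0 < x := lt_trans h0 hx.1
    have hx1 : x < 1 := hx.2
    have hpos : 0 < 1 - x ^ 2 := by nlinarith
    have hs : 0 < Real.sqrt (1 - x ^ 2) := Real.sqrt_pos.2 hpos
    have hsq : Real.sqrt (1 - x ^ 2) ^ 2 = 1 - x ^ 2 := Real.sq_sqrt hpos.le
    have hd1 := hds_sqrt hx0 hx1
    have hd2 : HasDerivAt (fun t : ℝ => Real.log (1 + Real.sqrt (1 - t ^ 2)))
        ((-x / Real.sqrt (1 - x ^ 2)) / (1 + Real.sqrt (1 - x ^ 2))) x := by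
      have := (Real.hasDerivAt_log (by positivity : (1 + Real.sqrt (1 - x ^ 2)) ≠ 0)).comp x
        (hd1.const_add 1)
      refine this.congr_deriv (Eq.symm ?_)
      ring
    have hd3 := Real.hasDerivAt_log (ne_of_gt hx0)
    have := (hd1.sub hd2).add hd3
    refine this.congr_deriv (Eq.symm ?_)
    rw [integrand_eq hx0]
    set s := Real.sqrt (1 - x ^ 2)
    field_simp
    ring_nf
    linear_combination s * hsq
  have hint : IntervalIntegrable (fun t => Real.sqrt (1 / t ^ 2 - 1)) MeasureTheory.volume ζ 1 := by
    apply ContinuousOn.intervalIntegrable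
    rw [Set.uIcc_of_le h1]
    apply ContinuousOn.sqrt
    apply ContinuousOn.sub _ continuousOn_const
    apply ContinuousOn.div continuousOn_const (continuousOn_pow 2)
    intro x hx
    exact pow_ne_zero 2 (ne_of_gt (lt_of_lt_of_le h0 hx.1))
  have := intervalIntegral.integral_eq_sub_of_hasDerivAt_of_le h1 hcont hderiv hint
  rw [this, hF]
  simp [Real.sqrt_eq_zero', Real.log_one]
  ring

lemma g0_eq {ζ : ℝ} (h0 : 0 < ζ) (h1 : ζ ≤ 1) : g0 ζ = Gaux ζ := by
  unfold g0 Gaux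
  rw [integral_eval h0 h1, rpow_32 (by nlinarith : (0 : ℝ) ≤ 1 - ζ ^ 2)]

lemma Gaux_deriv_neg {x : ℝ} (hx0 : 0 < x) (hx1 : x < 1) (hq : 0 < x ^ 4 - 4 * x ^ 2 + 2) :
    ∃ D : ℝ, HasDerivAt Gaux D x ∧ D < 0 := by
  have hpos : 0 < 1 - x ^ 2 := by nlinarith
  have hv : 0 < 2 - x ^ 2 := by nlinarith
  set s := Real.sqrt (1 - x ^ 2) with hsdef
  have hs : 0 < s := Real.sqrt_pos.2 hpos
  have hsq : s ^ 2 = 1 - x ^ 2 := Real.sq_sqrt hpos.le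
  have hd1 : HasDerivAt (fun t : ℝ => Real.sqrt (1 - t ^ 2)) (-x / s) x := hds_sqrt hx0 hx1
  have hd2 : HasDerivAt (fun t : ℝ => Real.log (1 + Real.sqrt (1 - t ^ 2)))
      ((1 + s)⁻¹ * (-x / s)) x :=
    (Real.hasDerivAt_log (by positivity)).comp x (hd1.const_add 1)
  have hd3 : HasDerivAt Real.log x⁻¹ x := Real.hasDerivAt_log (ne_of_gt hx0)
  have hdp : HasDerivAt (fun t : ℝ => 1 - t ^ 2) (-(2 * x)) x := by
    simpa using (hasDerivAt_pow 2 x).const_sub 1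
  have hdv : HasDerivAt (fun t : ℝ => 2 - t ^ 2) (-(2 * x)) x := by
    simpa using (hasDerivAt_pow 2 x).const_sub 2
  have hdu : HasDerivAt (fun t : ℝ => (1 - t ^ 2) * Real.sqrt (1 - t ^ 2))
      (-(2 * x) * s + (1 - x ^ 2) * (-x / s)) x := hdp.mul hd1
  have hdq : HasDerivAt (fun t : ℝ => (1 - t ^ 2) * Real.sqrt (1 - t ^ 2) / (2 - t ^ 2))
      (((-(2 * x) * s + (1 - x ^ 2) * (-x / s)) * (2 - x ^ 2)
        - (1 - x ^ 2) * s * (-(2 * x))) / (2 - x ^ 2) ^ 2) x := hdu.div hdv (ne_of_gt hv)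
  have e1 : (1 - x ^ 2) * (-x / s) = -x * s := by
    field_simp
    linear_combination hsq
  rw [e1] at hdq
  have e2 : (1 + s)⁻¹ * (-x / s) - x⁻¹ - -x / s = -s / x := by
    field_simp
    linear_combination s * hsq
  refine ⟨_, ((hd2.sub hd3).sub hd1).sub hdq, ?_⟩
  rw [e2, ← hsq]
  have key : -s / x - ((-(2 * x) * s + -x * s) * (2 - x ^ 2) - s ^ 2 * s * -(2 * x)) / (2 - x ^ 2) ^ 2
      = -(s * (2 * (x ^ 4 - 4 * x ^ 2 + 2)) / (x * (2 - x ^ 2) ^ 2)) := by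
    field_simp
    linear_combination (-2 * x ^ 2) * hsq
  rw [key]
  have : 0 < s * (2 * (x ^ 4 - 4 * x ^ 2 + 2)) / (x * (2 - x ^ 2) ^ 2) := by positivity
  linarith

lemma sqrt2_lt : Real.sqrt 2 < 1.5 :=
  (Real.sqrt_lt' (by norm_num)).2 (by norm_num)

lemma one_lt_sqrt2 : 1 < Real.sqrt 2 :=
  (Real.lt_sqrt (by norm_num)).2 (by norm_num)

lemma Gaux_anti : StrictAntiOn Gaux (Set.Ioo 0 (Real.sqrt (2 - Real.sqrt 2))) := by
  have hb0 : (0 : ℝ) ≤ 2 - Real.sqrt 2 := by have := sqrt2_lt; norm_num at this ⊢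
  have hbsq : (Real.sqrt (2 - Real.sqrt 2)) ^ 2 = 2 - Real.sqrt 2 := Real.sq_sqrt hb0
  have hb1 : Real.sqrt (2 - Real.sqrt 2) < 1 := by
    have := one_lt_sqrt2
    exact (Real.sqrt_lt' (by norm_num)).2 (by nlinarith)
  apply strictAntiOn_of_deriv_neg (convex_Ioo _ _)
  · apply ContinuousOn.sub
    apply ContinuousOn.sub
    apply ContinuousOn.sub
    · apply ContinuousOn.log
      · exact (continuous_const.add ((continuous_const.sub (continuous_pow 2)).sqrt)).continuousOn
      · intro x hx; positivity
    · apply ContinuousOn.log continuousOn_id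
      intro x hx; exact ne_of_gt hx.1
    · exact (continuous_const.sub (continuous_pow 2)).continuousOn.sqrt
    · apply ContinuousOn.div
      · exact (((continuous_const.sub (continuous_pow 2)).mul
          ((continuous_const.sub (continuous_pow 2)).sqrt))).continuousOn
      · exact (continuous_const.sub (continuous_pow 2)).continuousOn
      · intro x hx
        have hx1 : x < 1 := lt_trans hx.2 hb1
        have : 0 < 2 - x ^ 2 := by nlinarith [hx.1]
        exact ne_of_gt this
  · intro x hx
    rw [interior_Ioo] at hx
    have hx0 : 0 < x := hx.1
    have hx1 : x < 1 := lt_trans hx.2 hb1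
    have hxsq : x ^ 2 < 2 - Real.sqrt 2 := by
      have := pow_lt_pow_left₀ hx.2 hx0.le (n := 2) (by norm_num)
      rwa [hbsq] at this
    have hq : 0 < x ^ 4 - 4 * x ^ 2 + 2 := by
      nlinarith [Real.sq_sqrt (by norm_num : (0:ℝ) ≤ 2), Real.sqrt_nonneg 2, sqrt2_lt]
    obtain ⟨D, hD, hDneg⟩ := Gaux_deriv_neg hx0 hx1 hq
    rwa [hD.deriv]

lemma g0_58_pos : 0 < g0 0.58 := by
  rw [g0_eq (by norm_num) (by norm_num)]
  unfold Gaux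
  rw [show (1 : ℝ) - 0.58 ^ 2 = 0.6636 by norm_num, show (2 : ℝ) - 0.58 ^ 2 = 1.6636 by norm_num]
  set s := Real.sqrt 0.6636 with hsdef
  have hs0 : 0 ≤ s := Real.sqrt_nonneg _
  have hs1 : (0.8146164 : ℝ) ≤ s := (Real.le_sqrt (by norm_num) (by norm_num)).2 (by norm_num)
  have hs2 : s ≤ 0.8146165 := (Real.sqrt_le_left (by norm_num)).2 (by norm_num)
  have hexp : Real.exp 1.1395622 < 1.8146164 / 0.58 := by
    have h := Real.exp_bound' (x := 0.5697811) (by norm_num) (by norm_num) (n := 7) (by norm_num)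
    simp only [Finset.sum_range_succ, Finset.sum_range_zero, Nat.factorial] at h
    norm_num at h
    have he : Real.exp 1.1395622 = Real.exp 0.5697811 * Real.exp 0.5697811 := by
      rw [← Real.exp_add]; norm_num
    rw [he]
    have hpos : 0 < Real.exp 0.5697811 := Real.exp_pos _
    nlinarith [h, hpos]
  have hlog1 : Real.log (1.8146164 / 0.58) ≤ Real.log ((1 + s) / 0.58) := by
    have : (1.8146164 : ℝ) / 0.58 ≤ (1 + s) / 0.58 :=
      (div_le_div_iff_of_pos_right (by norm_num)).2 (by linarith)
    exact (Real.log_le_log_iff (by norm_num) (by positivity)).2 this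
  have hlog : (1.1395622 : ℝ) < Real.log ((1 + s) / 0.58) :=
    lt_of_lt_of_le ((Real.lt_log_iff_exp_lt (by norm_num)).2 hexp) hlog1
  have hld : Real.log ((1 + s) / 0.58) = Real.log (1 + s) - Real.log 0.58 :=
    Real.log_div (by positivity) (by norm_num)
  rw [hld] at hlog
  have hsum : s + 0.6636 * s / 1.6636 ≤ 1.1395622 := by
    rw [show s + 0.6636 * s / 1.6636 = (2.3272 * s) / 1.6636 by ring,
      div_le_iff₀ (by norm_num : (0:ℝ) < 1.6636)]
    nlinarith [hs2]
  linarith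

lemma g0_59_neg : g0 0.59 < 0 := by
  rw [g0_eq (by norm_num) (by norm_num)]
  unfold Gaux
  rw [show (1 : ℝ) - 0.59 ^ 2 = 0.6519 by norm_num, show (2 : ℝ) - 0.59 ^ 2 = 1.6519 by norm_num]
  set s := Real.sqrt 0.6519 with hsdef
  have hs0 : 0 ≤ s := Real.sqrt_nonneg _
  have hs1 : (0.8074032 : ℝ) ≤ s := (Real.le_sqrt (by norm_num) (by norm_num)).2 (by norm_num)
  have hs2 : s ≤ 0.8074033 := (Real.sqrt_le_left (by norm_num)).2 (by norm_num)
  have hexp : 1.8074033 / 0.59 < Real.exp 1.1260339 := by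
    have h := Real.sum_le_exp_of_nonneg (x := 1.1260339) (by norm_num) 9
    simp only [Finset.sum_range_succ, Finset.sum_range_zero, Nat.factorial] at h
    norm_num at h
    linarith
  have hlog1 : Real.log ((1 + s) / 0.59) ≤ Real.log (1.8074033 / 0.59) := by
    have : (1 + s) / 0.59 ≤ (1.8074033 : ℝ) / 0.59 :=
      (div_le_div_iff_of_pos_right (by norm_num)).2 (by linarith)
    exact (Real.log_le_log_iff (by positivity) (by norm_num)).2 this
  have hlog : Real.log ((1 + s) / 0.59) < 1.1260339 :=
    lt_of_le_of_lt hlog1 ((Real.log_lt_iff_lt_exp (by norm_num)).2 hexp)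
  have hld : Real.log ((1 + s) / 0.59) = Real.log (1 + s) - Real.log 0.59 :=
    Real.log_div (by positivity) (by norm_num)
  rw [hld] at hlog
  have hsum : (1.1260339 : ℝ) ≤ s + 0.6519 * s / 1.6519 := by
    rw [show s + 0.6519 * s / 1.6519 = (2.3038 * s) / 1.6519 by ring,
      le_div_iff₀ (by norm_num : (0:ℝ) < 1.6519)]
    nlinarith [hs1]
  linarith

/-- `g₀(0.58) > 0` and `g₀(0.59) < 0`, hence the unique zero `ζ₀` of `g₀` in
`(0, √(2−√2))` satisfies `0.58 < ζ₀ < 0.59`. -/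
theorem stmt10 :
    g0 0.58 > 0 ∧ g0 0.59 < 0
      ∧ ∀ ζ₀ ∈ Set.Ioo (0 : ℝ) (Real.sqrt (2 - Real.sqrt 2)),
          g0 ζ₀ = 0 → 0.58 < ζ₀ ∧ ζ₀ < 0.59 := by
  have hb0 : (0 : ℝ) ≤ 2 - Real.sqrt 2 := by nlinarith [sqrt2_lt]
  have hb1 : Real.sqrt (2 - Real.sqrt 2) < 1 := by
    have := one_lt_sqrt2
    exact (Real.sqrt_lt' (by norm_num)).2 (by nlinarith)
  have h58mem : (0.58 : ℝ) ∈ Set.Ioo (0 : ℝ) (Real.sqrt (2 - Real.sqrt 2)) := by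
    constructor
    · norm_num
    · exact (Real.lt_sqrt (by norm_num)).2 (by nlinarith [sqrt2_lt])
  have h59mem : (0.59 : ℝ) ∈ Set.Ioo (0 : ℝ) (Real.sqrt (2 - Real.sqrt 2)) := by
    constructor
    · norm_num
    · exact (Real.lt_sqrt (by norm_num)).2 (by nlinarith [sqrt2_lt])
  refine ⟨g0_58_pos, g0_59_neg, ?_⟩
  intro ζ₀ hmem hzero
  have hζ1 : ζ₀ ≤ 1 := le_of_lt (lt_trans hmem.2 hb1)
  have hGz : Gaux ζ₀ = 0 := by rw [← g0_eq hmem.1 hζ1]; exact hzero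
  constructor
  · by_contra h
    push_neg at h
    rcases eq_or_lt_of_le h with heq | hlt
    · have : g0 0.58 = 0 := heq ▸ hzero
      linarith [g0_58_pos]
    · have := Gaux_anti hmem h58mem hlt
      have h58 : Gaux 0.58 = g0 0.58 := (g0_eq (by norm_num) (by norm_num)).symm
      rw [hGz, h58] at this
      linarith [g0_58_pos]
  · by_contra h
    push_neg at h
    rcases eq_or_lt_of_le h with heq | hlt
    · have : g0 0.59 = 0 := heq ▸ hzero
      linarith [g0_59_neg]
    · have := Gaux_anti h59mem hmem hlt
      have h59 : Gaux 0.59 = g0 0.59 := (g0_eq (by norm_num) (by norm_num)).symm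
      rw [hGz, h59] at this
      linarith [g0_59_neg]
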